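/- For a measurable function V : ℝ^N → [0,∞) define 𝐆(V)(x) = ∫₀^∞ ∫_{ℝ^N} w(B(x,√s))^{−1} e^{−‖x−y‖²/s} V(y) dw(y) ds and 𝒢(V)(x) = ∫₀^∞ ∫_{ℝ^N} w(B(x,√s))^{−1} e^{−d(x,y)²/s} V(y) dw(y) ds. Then 𝐆(V)(x) ≤ 𝒢(V)(x) for every x ∈ ℝ^N, and there is a constant C > 0, depending only on R and k, such that sup_{x∈ℝ^N} 𝒢(V)(x) ≤ C · sup_{x∈ℝ^N} 𝐆(V)(x) for every measurable V : ℝ^N → [0,∞). -/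

import Mathlib

open scoped RealInnerProductSpace ENNReal
open MeasureTheory Filter Topology

noncomputable section

/-- The reflection `σ_α(x) = x − 2(⟨x,α⟩/‖α‖²)α` in the hyperplane orthogonal to `α`. -/
def dunklReflection {N : ℕ} (α x : EuclideanSpace ℝ (Fin N)) : EuclideanSpace ℝ (Fin N) :=
  x - (2 * ⟪x, α⟫ / ‖α‖ ^ 2) • α

/-- `R` is a normalized root system: `R ∩ ℝα = {α, −α}`, `σ_α(R) = R`, `‖α‖ = √2`
for every `α ∈ R` (and `0 ∉ R`). -/
def IsNormalizedRootSystem {N : ℕ} (R : Finset (EuclideanSpace ℝ (Fin N))) : Prop :=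
  (0 : EuclideanSpace ℝ (Fin N)) ∉ R ∧
  (∀ α ∈ R, ∀ β ∈ R, (∃ c : ℝ, β = c • α) → β = α ∨ β = -α) ∧
  (∀ α ∈ R, -α ∈ R) ∧
  (∀ α ∈ R, dunklReflection α '' (R : Set (EuclideanSpace ℝ (Fin N)))
      = (R : Set (EuclideanSpace ℝ (Fin N)))) ∧
  (∀ α ∈ R, ‖α‖ = Real.sqrt 2)

/-- The group `G` generated by the reflections `σ_α`, `α ∈ R`, viewed as a subgroup of the
orthogonal group (group of linear isometries) of `ℝ^N`. -/
def reflGroup {N : ℕ} (R : Finset (EuclideanSpace ℝ (Fin N))) :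
    Subgroup (EuclideanSpace ℝ (Fin N) ≃ₗᵢ[ℝ] EuclideanSpace ℝ (Fin N)) :=
  Subgroup.closure {g | ∃ α ∈ R, ∀ x, g x = dunklReflection α x}

/-- The orbit distance `d(x,y) = min {‖x − σ(y)‖ : σ ∈ G}`. -/
def orbitDist {N : ℕ} (R : Finset (EuclideanSpace ℝ (Fin N)))
    (x y : EuclideanSpace ℝ (Fin N)) : ℝ :=
  sInf {r | ∃ σ ∈ reflGroup R, r = ‖x - σ y‖}

/-- `σ_𝛂 = σ_{α_m} ∘ ⋯ ∘ σ_{α_1}` for `𝛂 = (α_1, …, α_m)`. -/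
def reflSeq {N : ℕ} : List (EuclideanSpace ℝ (Fin N)) → EuclideanSpace ℝ (Fin N) →
    EuclideanSpace ℝ (Fin N)
  | [], y => y
  | a :: l, y => reflSeq l (dunklReflection a y)

/-- `ρ_𝛂(x,y,t) = ∏_{j=0}^{m−1} (1 + ‖x − σ_{α_j}∘⋯∘σ_{α_1}(y)‖/√t)^{−2}`. -/
def rhoSeq {N : ℕ} (x : EuclideanSpace ℝ (Fin N)) (t : ℝ) :
    List (EuclideanSpace ℝ (Fin N)) → EuclideanSpace ℝ (Fin N) → ℝ
  | [], _ => 1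
  | a :: l, y => ((1 + ‖x - y‖ / Real.sqrt t) ^ 2)⁻¹ * rhoSeq x t l (dunklReflection a y)

/-- `𝛂` is admissible for `(x,y)`: `d(x, σ_𝛂(y)) = ‖x − σ_𝛂(y)‖`. -/
def IsAdmissible {N : ℕ} (R : Finset (EuclideanSpace ℝ (Fin N)))
    (x y : EuclideanSpace ℝ (Fin N)) (l : List (EuclideanSpace ℝ (Fin N))) : Prop :=
  orbitDist R x (reflSeq l y) = ‖x - reflSeq l y‖

/-- `Λ_B(x,y,t) = Σ_{𝛂 ∈ 𝒜(x,y), ℓ(𝛂) ≤ B} ρ_𝛂(x,y,t)` (a finite sum, written as a `tsum`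
over the finite type of admissible sequences of roots of length at most `B`). -/
def LambdaFn {N : ℕ} (R : Finset (EuclideanSpace ℝ (Fin N))) (B : ℕ)
    (x y : EuclideanSpace ℝ (Fin N)) (t : ℝ) : ℝ :=
  ∑' l : {l : List (EuclideanSpace ℝ (Fin N)) //
      (∀ a ∈ l, a ∈ R) ∧ l.length ≤ B ∧ IsAdmissible R x y l},
    rhoSeq x t l.1 y

/-- The density `w(x) = ∏_{α∈R} |⟨x,α⟩|^{k(α)}`. -/
def wDensity {N : ℕ} (R : Finset (EuclideanSpace ℝ (Fin N)))
    (k : EuclideanSpace ℝ (Fin N) → ℝ) (x : EuclideanSpace ℝ (Fin N)) : ℝ :=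
  ∏ α ∈ R, |⟪x, α⟫| ^ (k α)

/-- The measure `dw(x) = w(x) dx`. -/
def wMeasure {N : ℕ} (R : Finset (EuclideanSpace ℝ (Fin N)))
    (k : EuclideanSpace ℝ (Fin N) → ℝ) : Measure (EuclideanSpace ℝ (Fin N)) :=
  volume.withDensity fun x => ENNReal.ofReal (wDensity R k x)

/-- `𝐆(V)(x) = ∫₀^∞ ∫ w(B(x,√s))⁻¹ e^{−‖x−y‖²/s} V(y) dw(y) ds`. -/
def greenEuclid {N : ℕ} (R : Finset (EuclideanSpace ℝ (Fin N)))
    (k : EuclideanSpace ℝ (Fin N) → ℝ) (V : EuclideanSpace ℝ (Fin N) → ℝ)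
    (x : EuclideanSpace ℝ (Fin N)) : ℝ≥0∞ :=
  ∫⁻ s in Set.Ioi (0 : ℝ),
    ∫⁻ y, (wMeasure R k (Metric.closedBall x (Real.sqrt s)))⁻¹ *
      ENNReal.ofReal (Real.exp (-‖x - y‖ ^ 2 / s) * V y) ∂(wMeasure R k)

/-- `𝒢(V)(x) = ∫₀^∞ ∫ w(B(x,√s))⁻¹ e^{−d(x,y)²/s} V(y) dw(y) ds`. -/
def greenOrbit {N : ℕ} (R : Finset (EuclideanSpace ℝ (Fin N)))
    (k : EuclideanSpace ℝ (Fin N) → ℝ) (V : EuclideanSpace ℝ (Fin N) → ℝ)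
    (x : EuclideanSpace ℝ (Fin N)) : ℝ≥0∞ :=
  ∫⁻ s in Set.Ioi (0 : ℝ),
    ∫⁻ y, (wMeasure R k (Metric.closedBall x (Real.sqrt s)))⁻¹ *
      ENNReal.ofReal (Real.exp (-(orbitDist R x y) ^ 2 / s) * V y) ∂(wMeasure R k)

lemma reflGroup_props {N : ℕ} {R : Finset (EuclideanSpace ℝ (Fin N))}
    (hR : IsNormalizedRootSystem R)
    {σ : EuclideanSpace ℝ (Fin N) ≃ₗᵢ[ℝ] EuclideanSpace ℝ (Fin N)}
    (hσ : σ ∈ reflGroup R) :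
    (∀ α ∈ R, σ α ∈ R) ∧
      (∀ v : EuclideanSpace ℝ (Fin N), (∀ α ∈ R, ⟪v, α⟫ = 0) → σ v = v) := by
  refine Subgroup.closure_induction
    (p := fun g _ => (∀ α ∈ R, g α ∈ R) ∧
      (∀ v, (∀ α ∈ R, ⟪v, α⟫ = 0) → g v = v)) ?_ ?_ ?_ ?_ hσ
  · rintro g ⟨α, hα, hg⟩
    constructor
    · intro β hβ
      rw [hg]
      have h := hR.2.2.2.1 α hα
      rw [← Finset.mem_coe, ← h]
      exact Set.mem_image_of_mem _ (Finset.mem_coe.2 hβ)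
    · intro v hv
      rw [hg, dunklReflection, hv α hα]
      simp
  · exact ⟨fun α hα => by simpa using hα, fun v _ => rfl⟩
  · rintro g h _ _ ⟨pg1, pg2⟩ ⟨ph1, ph2⟩
    refine ⟨fun α hα => ?_, fun v hv => ?_⟩
    · rw [LinearIsometryEquiv.coe_mul, Function.comp_apply]
      exact pg1 _ (ph1 α hα)
    · rw [LinearIsometryEquiv.coe_mul, Function.comp_apply, ph2 v hv, pg2 v hv]
  · rintro g _ ⟨pg1, pg2⟩
    refine ⟨fun α hα => ?_, fun v hv => ?_⟩
    · obtain ⟨a, ha, rfl⟩ := Finset.surj_on_of_inj_on_of_card_le (fun a (_ : a ∈ R) => g a)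
        (fun a ha => pg1 a ha) (fun a₁ a₂ _ _ h => g.injective h) le_rfl α hα
      rw [LinearIsometryEquiv.coe_inv, g.symm_apply_apply]
      exact ha
    · have h1 := pg2 v hv
      rw [LinearIsometryEquiv.coe_inv]
      conv_lhs => rw [← h1]
      exact g.symm_apply_apply v


lemma reflGroup_finite {N : ℕ} {R : Finset (EuclideanSpace ℝ (Fin N))}
    (hR : IsNormalizedRootSystem R) : Finite ↥(reflGroup R) := by
  classical
  have hcompl : IsCompl (Submodule.span ℝ (R : Set (EuclideanSpace ℝ (Fin N))))
      (Submodule.span ℝ (R : Set (EuclideanSpace ℝ (Fin N))))ᗮ :=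
    Submodule.isCompl_orthogonal _
  refine Finite.of_injective
    (fun σ : ↥(reflGroup R) => fun α : {x // x ∈ R} =>
      (⟨σ.1 α.1, (reflGroup_props hR σ.2).1 α.1 α.2⟩ : {x // x ∈ R})) ?_
  intro σ τ hστ
  have hag : ∀ α ∈ R, σ.1 α = τ.1 α := by
    intro α hα
    have := congrFun hστ ⟨α, hα⟩
    exact congrArg Subtype.val this
  refine Subtype.ext (LinearIsometryEquiv.ext fun x => ?_)
  have hx : x ∈ Submodule.span ℝ (R : Set (EuclideanSpace ℝ (Fin N))) ⊔ (Submodule.span ℝ (R : Set (EuclideanSpace ℝ (Fin N))))ᗮ := by rw [hcompl.sup_eq_top]; trivial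
  obtain ⟨a, ha, b, hb, rfl⟩ := Submodule.mem_sup.1 hx
  have hfix : ∀ (g : ↥(reflGroup R)), g.1 b = b := by
    intro g
    refine (reflGroup_props hR g.2).2 b fun α hα => ?_
    have := hb
    rw [Submodule.mem_orthogonal] at this
    have h := this α (Submodule.subset_span (Finset.mem_coe.2 hα))
    rwa [real_inner_comm] at h
  have hspan : σ.1 a = τ.1 a := by
    refine Submodule.span_induction (p := fun a _ => σ.1 a = τ.1 a) ?_ ?_ ?_ ?_ ha
    · intro u hu; exact hag u (Finset.mem_coe.1 hu)
    · simp
    · intro u v _ _ hu hv; simp [map_add, hu, hv]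
    · intro c u _ hu; simp [_root_.map_smul, hu]
  calc σ.1 (a + b) = σ.1 a + σ.1 b := map_add _ _ _
    _ = τ.1 a + τ.1 b := by rw [hspan, hfix σ, hfix τ]
    _ = τ.1 (a + b) := (map_add _ _ _).symm


lemma wDensity_invariant {N : ℕ} {R : Finset (EuclideanSpace ℝ (Fin N))}
    (hR : IsNormalizedRootSystem R) {k : EuclideanSpace ℝ (Fin N) → ℝ}
    (hkG : ∀ σ ∈ reflGroup R, ∀ α ∈ R, k (σ α) = k α)
    {σ : EuclideanSpace ℝ (Fin N) ≃ₗᵢ[ℝ] EuclideanSpace ℝ (Fin N)}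
    (hσ : σ ∈ reflGroup R) (x : EuclideanSpace ℝ (Fin N)) :
    wDensity R k (σ x) = wDensity R k x := by
  unfold wDensity
  refine Finset.prod_bij' (fun a _ => σ⁻¹ a) (fun a _ => σ a) ?_ ?_ ?_ ?_ ?_
  · intro a ha
    exact (reflGroup_props hR (inv_mem hσ)).1 a ha
  · intro a ha
    exact (reflGroup_props hR hσ).1 a ha
  · intro a _
    show σ (σ⁻¹ a) = a
    rw [LinearIsometryEquiv.coe_inv]
    exact σ.apply_symm_apply a
  · intro a _
    show σ⁻¹ (σ a) = a
    rw [LinearIsometryEquiv.coe_inv]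
    exact σ.symm_apply_apply a
  · intro a ha
    have h1 : ⟪σ x, a⟫ = ⟪x, σ⁻¹ a⟫ := by
      conv_lhs => rw [show a = σ (σ⁻¹ a) by
        rw [LinearIsometryEquiv.coe_inv]; exact (σ.apply_symm_apply a).symm]
      exact σ.inner_map_map x (σ⁻¹ a)
    have h2 : k (σ⁻¹ a) = k a := by
      have hmem : σ⁻¹ a ∈ R := (reflGroup_props hR (inv_mem hσ)).1 a ha
      have := hkG σ hσ (σ⁻¹ a) hmem
      rw [show σ (σ⁻¹ a) = a by
        rw [LinearIsometryEquiv.coe_inv]; exact σ.apply_symm_apply a] at this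
      exact this.symm
    rw [h1, h2]

lemma wMeasure_ball_invariant {N : ℕ} {R : Finset (EuclideanSpace ℝ (Fin N))}
    (hR : IsNormalizedRootSystem R) {k : EuclideanSpace ℝ (Fin N) → ℝ}
    (hkG : ∀ σ ∈ reflGroup R, ∀ α ∈ R, k (σ α) = k α)
    {σ : EuclideanSpace ℝ (Fin N) ≃ₗᵢ[ℝ] EuclideanSpace ℝ (Fin N)}
    (hσ : σ ∈ reflGroup R) (x : EuclideanSpace ℝ (Fin N)) (r : ℝ) :
    wMeasure R k (Metric.closedBall (σ x) r) = wMeasure R k (Metric.closedBall x r) := by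
  have hpre : Metric.closedBall (σ x) r = σ.symm ⁻¹' (Metric.closedBall x r) := by
    ext z
    simp only [Metric.mem_closedBall, Set.mem_preimage, dist_eq_norm]
    have : ‖σ.symm z - x‖ = ‖z - σ x‖ := by
      rw [← σ.norm_map (σ.symm z - x), map_sub, σ.apply_symm_apply]
    rw [this]
  have hmp : MeasurePreserving σ.symm (volume : Measure (EuclideanSpace ℝ (Fin N))) volume :=
    σ.symm.measurePreserving
  have hemb : MeasurableEmbedding (σ.symm : EuclideanSpace ℝ (Fin N) → EuclideanSpace ℝ (Fin N)) :=
    σ.symm.toHomeomorph.measurableEmbedding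
  have hms : MeasurableSet (σ.symm ⁻¹' (Metric.closedBall x r)) :=
    σ.symm.continuous.measurable measurableSet_closedBall
  rw [hpre]
  unfold wMeasure
  rw [withDensity_apply _ hms, withDensity_apply _ measurableSet_closedBall]
  rw [← hmp.setLIntegral_comp_preimage_emb hemb
    (fun y => ENNReal.ofReal (wDensity R k y)) (Metric.closedBall x r)]
  refine lintegral_congr fun z => ?_
  have : wDensity R k (σ.symm z) = wDensity R k z := by
    have := wDensity_invariant hR hkG (inv_mem hσ) z
    rwa [LinearIsometryEquiv.coe_inv] at this
  rw [this]

lemma orbitDist_nonneg {N : ℕ} (R : Finset (EuclideanSpace ℝ (Fin N)))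
    (x y : EuclideanSpace ℝ (Fin N)) : 0 ≤ orbitDist R x y := by
  refine le_csInf ⟨‖x - y‖, 1, one_mem _, by simp⟩ ?_
  rintro r ⟨σ, hσ, rfl⟩
  positivity

lemma orbitDist_le {N : ℕ} (R : Finset (EuclideanSpace ℝ (Fin N)))
    (x y : EuclideanSpace ℝ (Fin N)) : orbitDist R x y ≤ ‖x - y‖ := by
  have h1 : ‖x - y‖ ∈ {r | ∃ σ ∈ reflGroup R, r = ‖x - σ y‖} := ⟨1, one_mem _, by simp⟩
  refine csInf_le ⟨0, ?_⟩ h1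
  rintro r ⟨σ, hσ, rfl⟩
  positivity

lemma orbitDist_attained {N : ℕ} {R : Finset (EuclideanSpace ℝ (Fin N))}
    (hR : IsNormalizedRootSystem R) (x y : EuclideanSpace ℝ (Fin N)) :
    ∃ σ ∈ reflGroup R, orbitDist R x y = ‖x - σ y‖ := by
  haveI := reflGroup_finite hR
  have hset : {r | ∃ σ ∈ reflGroup R, r = ‖x - σ y‖}
      = Set.range (fun σ : ↥(reflGroup R) => ‖x - σ.1 y‖) := by
    ext r
    constructor
    · rintro ⟨σ, hσ, rfl⟩; exact ⟨⟨σ, hσ⟩, rfl⟩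
    · rintro ⟨⟨σ, hσ⟩, rfl⟩; exact ⟨σ, hσ, rfl⟩
  have hne : {r | ∃ σ ∈ reflGroup R, r = ‖x - σ y‖}.Nonempty := ⟨_, 1, one_mem _, rfl⟩
  have hfin : {r | ∃ σ ∈ reflGroup R, r = ‖x - σ y‖}.Finite := by
    rw [hset]; exact Set.finite_range _
  exact hne.csInf_mem hfin


/-- `𝐆(V) ≤ 𝒢(V)` pointwise, and there is a constant `C > 0`, depending only on `R` and
`k`, such that `sup 𝒢(V) ≤ C · sup 𝐆(V)` for every measurable `V : ℝ^N → [0,∞)`. -/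
theorem green_kernels_comparable {N : ℕ} (hN : 1 ≤ N)
    (R : Finset (EuclideanSpace ℝ (Fin N))) (hR : IsNormalizedRootSystem R)
    (k : EuclideanSpace ℝ (Fin N) → ℝ) (hk : ∀ α ∈ R, 0 < k α)
    (hkG : ∀ σ ∈ reflGroup R, ∀ α ∈ R, k (σ α) = k α) :
    (∀ V : EuclideanSpace ℝ (Fin N) → ℝ, Measurable V → (∀ y, 0 ≤ V y) →
      ∀ x, greenEuclid R k V x ≤ greenOrbit R k V x) ∧
    ∃ C : ℝ, 0 < C ∧ ∀ V : EuclideanSpace ℝ (Fin N) → ℝ, Measurable V → (∀ y, 0 ≤ V y) →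
      ⨆ x, greenOrbit R k V x ≤ ENNReal.ofReal C * ⨆ x, greenEuclid R k V x := by
  classical
  haveI hfin : Finite ↥(reflGroup R) := reflGroup_finite hR
  letI : Fintype ↥(reflGroup R) := Fintype.ofFinite _
  haveI hsf : SFinite (wMeasure R k) := by unfold wMeasure; infer_instance
  constructor
  · intro V hV hV0 x
    unfold greenEuclid greenOrbit
    refine lintegral_mono_ae ?_
    filter_upwards [self_mem_ae_restrict measurableSet_Ioi] with s hs
    refine lintegral_mono fun y => ?_
    refine mul_le_mul_right (ENNReal.ofReal_le_ofReal ?_) _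
    refine mul_le_mul_of_nonneg_right ?_ (hV0 y)
    refine Real.exp_le_exp.2 ?_
    have hsq : orbitDist R x y ^ 2 ≤ ‖x - y‖ ^ 2 :=
      pow_le_pow_left₀ (orbitDist_nonneg R x y) (orbitDist_le R x y) 2
    have hs' : (0 : ℝ) < s := hs
    rw [neg_div, neg_div, neg_le_neg_iff]
    gcongr
  · refine ⟨(Fintype.card ↥(reflGroup R) : ℝ), Nat.cast_pos.2 Fintype.card_pos, ?_⟩
    intro V hV hV0
    refine iSup_le fun x => ?_
    have hmeas_s : ∀ σ : ↥(reflGroup R), Measurable fun s : ℝ =>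
        ∫⁻ y, (wMeasure R k (Metric.closedBall (σ.1 x) (Real.sqrt s)))⁻¹ *
          ENNReal.ofReal (Real.exp (-‖σ.1 x - y‖ ^ 2 / s) * V y) ∂(wMeasure R k) := by
      intro σ
      have hjoint : Measurable fun q : ℝ × EuclideanSpace ℝ (Fin N) =>
          (wMeasure R k (Metric.closedBall (σ.1 x) (Real.sqrt q.1)))⁻¹ *
            ENNReal.ofReal (Real.exp (-‖σ.1 x - q.2‖ ^ 2 / q.1) * V q.2) := by
        apply Measurable.mul
        · have hmono : Monotone fun s : ℝ =>
              wMeasure R k (Metric.closedBall (σ.1 x) (Real.sqrt s)) := fun a b hab =>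
            measure_mono (Metric.closedBall_subset_closedBall (Real.sqrt_le_sqrt hab))
          exact (hmono.measurable.inv).comp measurable_fst
        · apply ENNReal.measurable_ofReal.comp
          apply Measurable.mul ?_ (hV.comp measurable_snd)
          apply Real.continuous_exp.measurable.comp
          apply Measurable.div ?_ measurable_fst
          exact (((continuous_const.sub continuous_snd).norm.pow 2).neg).measurable
      exact Measurable.lintegral_prod_right' hjoint
    have key : greenOrbit R k V x ≤ ∑ σ : ↥(reflGroup R), greenEuclid R k V (σ.1 x) := by
      unfold greenOrbit greenEuclid
      have hpt : ∀ s : ℝ,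
          (∫⁻ y, (wMeasure R k (Metric.closedBall x (Real.sqrt s)))⁻¹ *
            ENNReal.ofReal (Real.exp (-(orbitDist R x y) ^ 2 / s) * V y) ∂(wMeasure R k))
          ≤ ∑ σ : ↥(reflGroup R),
            ∫⁻ y, (wMeasure R k (Metric.closedBall (σ.1 x) (Real.sqrt s)))⁻¹ *
              ENNReal.ofReal (Real.exp (-‖σ.1 x - y‖ ^ 2 / s) * V y) ∂(wMeasure R k) := by
        intro s
        have hmeas : ∀ σ : ↥(reflGroup R), Measurable fun y =>
            (wMeasure R k (Metric.closedBall (σ.1 x) (Real.sqrt s)))⁻¹ *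
              ENNReal.ofReal (Real.exp (-‖σ.1 x - y‖ ^ 2 / s) * V y) := by
          intro σ
          apply Measurable.const_mul
          apply ENNReal.measurable_ofReal.comp
          apply Measurable.mul ?_ hV
          apply Real.continuous_exp.measurable.comp
          exact ((((continuous_const.sub continuous_id).norm.pow 2).neg.div_const s)).measurable
        rw [← lintegral_finset_sum Finset.univ (fun σ _ => hmeas σ)]
        refine lintegral_mono fun y => ?_
        obtain ⟨σ₀, hσ₀, hd⟩ := orbitDist_attained hR x y
        have hball : wMeasure R k (Metric.closedBall (σ₀⁻¹ x) (Real.sqrt s))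
            = wMeasure R k (Metric.closedBall x (Real.sqrt s)) :=
          wMeasure_ball_invariant hR hkG (inv_mem hσ₀) x _
        have hnorm : ‖σ₀⁻¹ x - y‖ = ‖x - σ₀ y‖ := by
          rw [LinearIsometryEquiv.coe_inv, ← σ₀.norm_map (σ₀.symm x - y), map_sub,
            σ₀.apply_symm_apply]
        have hle : (wMeasure R k (Metric.closedBall x (Real.sqrt s)))⁻¹ *
            ENNReal.ofReal (Real.exp (-(orbitDist R x y) ^ 2 / s) * V y)
            = (fun σ : ↥(reflGroup R) =>
              (wMeasure R k (Metric.closedBall (σ.1 x) (Real.sqrt s)))⁻¹ *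
                ENNReal.ofReal (Real.exp (-‖σ.1 x - y‖ ^ 2 / s) * V y))
              (⟨σ₀, hσ₀⟩⁻¹ : ↥(reflGroup R)) := by
          simp only
          rw [hd]
          have hc : ((⟨σ₀, hσ₀⟩⁻¹ : ↥(reflGroup R)) : _) = σ₀⁻¹ := rfl
          rw [hc, hball, hnorm]
        rw [hle]
        exact Finset.single_le_sum (f := fun σ : ↥(reflGroup R) =>
          (wMeasure R k (Metric.closedBall (σ.1 x) (Real.sqrt s)))⁻¹ *
            ENNReal.ofReal (Real.exp (-‖σ.1 x - y‖ ^ 2 / s) * V y))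
          (fun _ _ => zero_le) (Finset.mem_univ _)
      calc (∫⁻ s in Set.Ioi (0:ℝ),
            ∫⁻ y, (wMeasure R k (Metric.closedBall x (Real.sqrt s)))⁻¹ *
              ENNReal.ofReal (Real.exp (-(orbitDist R x y) ^ 2 / s) * V y) ∂(wMeasure R k))
          ≤ ∫⁻ s in Set.Ioi (0:ℝ), ∑ σ : ↥(reflGroup R),
            ∫⁻ y, (wMeasure R k (Metric.closedBall (σ.1 x) (Real.sqrt s)))⁻¹ *
              ENNReal.ofReal (Real.exp (-‖σ.1 x - y‖ ^ 2 / s) * V y) ∂(wMeasure R k) :=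
            lintegral_mono fun s => hpt s
        _ = ∑ σ : ↥(reflGroup R), ∫⁻ s in Set.Ioi (0:ℝ),
            ∫⁻ y, (wMeasure R k (Metric.closedBall (σ.1 x) (Real.sqrt s)))⁻¹ *
              ENNReal.ofReal (Real.exp (-‖σ.1 x - y‖ ^ 2 / s) * V y) ∂(wMeasure R k) :=
            lintegral_finset_sum Finset.univ (fun σ _ => hmeas_s σ)
    calc greenOrbit R k V x ≤ ∑ σ : ↥(reflGroup R), greenEuclid R k V (σ.1 x) := key
      _ ≤ ∑ _σ : ↥(reflGroup R), ⨆ x', greenEuclid R k V x' :=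
          Finset.sum_le_sum fun σ _ => le_iSup (fun x' => greenEuclid R k V x') (σ.1 x)
      _ = (Fintype.card ↥(reflGroup R)) • (⨆ x', greenEuclid R k V x') := by
          rw [Finset.sum_const, Finset.card_univ]
      _ = ENNReal.ofReal ((Fintype.card ↥(reflGroup R) : ℝ)) * ⨆ x', greenEuclid R k V x' := by
          rw [nsmul_eq_mul, ENNReal.ofReal_natCast]

end
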